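/- A 4×4 real symmetric matrix V = [[A,C],[C^T,B]] satisfies V + iΩ ≥ 0 if and only if: A > 0, B > 0, Δ(V) ≤ 1 + det V, and 2√(det A · det B) + (det C)² ≤ det V + det A · det B, where Δ(V) = det A + det B + 2 det C. -/

import Mathlib

open Matrix
open scoped ComplexOrder

def omega2 : Matrix (Fin 2) (Fin 2) ℝ := !![0, 1; -1, 0]

/-- The two-mode symplectic form Ω = ω ⊕ ω, in block form. -/
def Omega2mode : Matrix (Fin 2 ⊕ Fin 2) (Fin 2 ⊕ Fin 2) ℝ :=
  Matrix.fromBlocks omega2 0 0 omega2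

noncomputable def cplx {ι : Type*} (M : Matrix ι ι ℝ) : Matrix ι ι ℂ :=
  M.map Complex.ofReal

section Aux

lemma t2' {α : Type*} (a b c d : α) : (!![a, b; c, d])ᵀ = !![a, c; b, d] := by
  ext i j
  fin_cases i <;> fin_cases j <;> simp

lemma charpoly_factor {n : Type*} [Fintype n] [DecidableEq n] {M : Matrix n n ℂ}
    (hM : M.IsHermitian) (x : ℝ) :
    det ((x : ℂ) • (1 : Matrix n n ℂ) - M) = ∏ i, ((x : ℂ) - (hM.eigenvalues i : ℂ)) := by
  set U : Matrix n n ℂ := (Matrix.IsHermitian.eigenvectorUnitary hM : Matrix n n ℂ) with hU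
  have hU1 : U * star U = 1 := (Matrix.mem_unitaryGroup_iff).mp
    (Matrix.IsHermitian.eigenvectorUnitary hM).2
  have hU2 : star U * U = 1 := (Matrix.mem_unitaryGroup_iff').mp
    (Matrix.IsHermitian.eigenvectorUnitary hM).2
  have key : (x : ℂ) • (1 : Matrix n n ℂ) - M
      = U * ((x : ℂ) • 1 - diagonal (RCLike.ofReal ∘ hM.eigenvalues)) * star U := by
    rw [Matrix.mul_sub, Matrix.sub_mul]
    congr 1
    · rw [Matrix.mul_smul, mul_one, Matrix.smul_mul, hU1]
    · conv_lhs => rw [hM.spectral_theorem]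
      rfl
  rw [key, det_mul, det_mul, mul_comm, ← mul_assoc, ← det_mul, hU2, det_one, one_mul]
  have : (x : ℂ) • (1 : Matrix n n ℂ) - diagonal (RCLike.ofReal ∘ hM.eigenvalues)
      = diagonal (fun i => (x : ℂ) - (hM.eigenvalues i : ℂ)) := by
    ext i j
    by_cases h : i = j <;>
      simp [h, Matrix.diagonal_apply, Matrix.one_apply, Matrix.sub_apply, Matrix.smul_apply]
  rw [this, det_diagonal]

lemma conj_psd_iff {n : Type*} [Fintype n] [DecidableEq n] (S M : Matrix n n ℂ)
    (hS : IsUnit S.det) : (S * M * Sᴴ).PosSemidef ↔ M.PosSemidef := by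
  constructor
  · intro h
    have h2 := h.mul_mul_conjTranspose_same S⁻¹
    have e : S⁻¹ * (S * M * Sᴴ) * (S⁻¹)ᴴ = M := by
      rw [Matrix.conjTranspose_nonsing_inv]
      calc S⁻¹ * (S * M * Sᴴ) * (Sᴴ)⁻¹ = (S⁻¹ * S) * M * (Sᴴ * (Sᴴ)⁻¹) := by
            noncomm_ring
        _ = M := by
            rw [Matrix.nonsing_inv_mul _ hS, Matrix.mul_nonsing_inv _ (by
              rwa [Matrix.det_conjTranspose, isUnit_star]), one_mul, mul_one]
    rwa [e] at h2
  · intro h; exact h.mul_mul_conjTranspose_same S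

lemma mul_omega2_mul_transpose (M : Matrix (Fin 2) (Fin 2) ℝ) :
    M * omega2 * Mᵀ = M.det • omega2 := by
  ext i j
  fin_cases i <;> fin_cases j <;>
    simp [omega2, mul_apply, Fin.sum_univ_two, det_fin_two, Matrix.smul_apply] <;> ring

lemma posDef_two_iff (A : Matrix (Fin 2) (Fin 2) ℝ) (hA : Aᵀ = A)
    (h00 : 0 < A 0 0) (hdet : 0 < A.det) : A.PosDef := by
  have h10 : A 1 0 = A 0 1 := by
    conv_lhs => rw [← hA]
    rfl
  have hd : A 0 0 * A 1 1 - A 0 1 * A 0 1 > 0 := by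
    have := A.det_fin_two
    rw [h10] at this
    linarith [hdet.trans_eq this]
  refine posDef_iff_dotProduct_mulVec.mpr ⟨?_, ?_⟩
  · rw [Matrix.IsHermitian]
    ext i j
    simp [conjTranspose_apply]
    exact congrFun (congrFun hA i) j
  · intro x hx
    have hx2 : x 0 ≠ 0 ∨ x 1 ≠ 0 := by
      by_contra h
      push_neg at h
      exact hx (funext fun i => by fin_cases i <;> simp [h.1, h.2])
    simp only [dotProduct, mulVec, Fin.sum_univ_two, Pi.star_apply, star_trivial]
    rw [h10]
    by_cases h1 : x 1 = 0
    · have h0 : x 0 ≠ 0 := by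
        rcases hx2 with h | h
        · exact h
        · exact absurd h1 h
      rw [h1]
      nlinarith [mul_pos h00 (pow_two_pos_of_ne_zero h0)]
    · nlinarith [sq_nonneg (A 0 0 * x 0 + A 0 1 * x 1), mul_pos hd (pow_two_pos_of_ne_zero h1)]

lemma normalize_posdef (A : Matrix (Fin 2) (Fin 2) ℝ) (hA : Aᵀ = A) (hpd : A.PosDef) :
    ∃ (S : Matrix (Fin 2) (Fin 2) ℝ) (a : ℝ), 0 < a ∧ a ^ 2 = A.det ∧ S.det = 1 ∧
      S * A * Sᵀ = a • (1 : Matrix (Fin 2) (Fin 2) ℝ) := by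
  have h10 : A 1 0 = A 0 1 := by
    conv_lhs => rw [← hA]
    rfl
  have hdet : 0 < A.det := hpd.det_pos
  set p := A 0 0 with hp_def; set q := A 0 1 with hq_def; set r := A 1 1 with hr_def
  have hAe : A = !![p, q; q, r] := by
    ext i j
    fin_cases i <;> fin_cases j <;> simp [h10, hp_def, hq_def, hr_def]
  have hd2 : A.det = p * r - q * q := by rw [det_fin_two, h10]
  set a := Real.sqrt A.det with ha_def
  have ha : 0 < a := Real.sqrt_pos.mpr hdet
  have ha2 : a ^ 2 = p * r - q * q := by rw [← hd2]; exact Real.sq_sqrt hdet.le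
  have hp : 0 < p := by
    have := hpd.dotProduct_mulVec_pos (x := (Pi.single 0 1 : Fin 2 → ℝ)) (by
      intro h
      have := congrFun h 0
      simp [Pi.single_apply] at this)
    simpa [dotProduct, mulVec, Fin.sum_univ_two, Pi.single_apply] using this
  have htt : 0 < a * (p + r + 2 * a) := by
    have hr : 0 < r := by nlinarith [sq_nonneg q, sq_nonneg a]
    positivity
  set n := Real.sqrt (a * (p + r + 2 * a)) with hn_def
  have hn : 0 < n := Real.sqrt_pos.mpr htt
  have hn2 : n ^ 2 = a * (p + r + 2 * a) := Real.sq_sqrt htt.le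
  set N : Matrix (Fin 2) (Fin 2) ℝ := !![r + a, -q; -q, p + a] with hN
  have hNT : Nᵀ = N := by
    rw [hN]
    ext i j
    fin_cases i <;> fin_cases j <;> simp
  have key : N * A * Nᵀ = (a * (a * (p + r + 2 * a))) • (1 : Matrix (Fin 2) (Fin 2) ℝ) := by
    rw [hNT, hAe]
    ext i j
    fin_cases i <;> fin_cases j <;>
      simp [hN, mul_apply, Fin.sum_univ_two, Matrix.smul_apply, Matrix.one_apply]
    · linear_combination (-(r + 2*a)) * ha2
    · linear_combination q * ha2
    · linear_combination q * ha2
    · linear_combination (-(p + 2*a)) * ha2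
  refine ⟨n⁻¹ • N, a, ha, by rw [← hd2] at ha2; exact ha2, ?_, ?_⟩
  · rw [Matrix.det_smul, hN, det_fin_two_of]
    have e1 : (r + a) * (p + a) - -q * -q = a * (p + r + 2 * a) := by linear_combination -ha2
    rw [e1, ← hn2]
    simp only [Fintype.card_fin]
    field_simp
  · rw [hNT] at key
    rw [Matrix.transpose_smul, hNT, Matrix.smul_mul, Matrix.smul_mul, Matrix.mul_smul,
      key, smul_smul, smul_smul]
    congr 1
    rw [← hn2]
    field_simp

lemma polar_step (C : Matrix (Fin 2) (Fin 2) ℝ) :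
    ∃ R : Matrix (Fin 2) (Fin 2) ℝ, R * Rᵀ = 1 ∧ R.det = 1 ∧ (R * C)ᵀ = R * C := by
  obtain ⟨c00, c01, c10, c11, hCe⟩ : ∃ a b c d, C = !![a, b; c, d] :=
    ⟨C 0 0, C 0 1, C 1 0, C 1 1, by ext i j; fin_cases i <;> fin_cases j <;> simp⟩
  subst hCe
  set u := c00 + c11 with hu
  set v := c01 - c10 with hv
  by_cases h0 : u ^ 2 + v ^ 2 = 0
  · have hv0 : v = 0 := by nlinarith [sq_nonneg u, sq_nonneg v]
    refine ⟨1, by simp, by simp, ?_⟩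
    rw [one_mul, t2']
    have : c10 = c01 := by simp [hv] at hv0; linarith
    rw [this]
  · have hpos : 0 < u ^ 2 + v ^ 2 := lt_of_le_of_ne (by positivity) (Ne.symm h0)
    set n := Real.sqrt (u ^ 2 + v ^ 2) with hn_def
    have hn : 0 < n := Real.sqrt_pos.mpr hpos
    have hn2 : n ^ 2 = u ^ 2 + v ^ 2 := Real.sq_sqrt hpos.le
    have hn2' : n ^ 2 = c00 ^ 2 + c11 ^ 2 + c01 ^ 2 + c10 ^ 2 + 2 * (c00 * c11) -
        2 * (c01 * c10) := by rw [hn2, hu, hv]; ring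
    refine ⟨!![u / n, -(v / n); v / n, u / n], ?_, ?_, ?_⟩
    · rw [t2', Matrix.mul_fin_two, one_fin_two]
      ext i j
      fin_cases i <;> fin_cases j <;> simp <;> (field_simp; linarith [hn2'])
    · rw [det_fin_two_of]
      field_simp
      linarith [hn2']
    · rw [Matrix.mul_fin_two, t2']
      ext i j
      fin_cases i <;> fin_cases j <;> simp
      · field_simp
        ring
      · field_simp
        ring

lemma diag_step (S : Matrix (Fin 2) (Fin 2) ℝ) (hs : Sᵀ = S) :
    ∃ G : Matrix (Fin 2) (Fin 2) ℝ, G * Gᵀ = 1 ∧ G.det = 1 ∧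
      (G * S * Gᵀ) 0 1 = 0 := by
  have h10 : S 1 0 = S 0 1 := by
    conv_lhs => rw [← hs]
    rfl
  obtain ⟨p, q, r, hSe⟩ : ∃ a b d, S = !![a, b; b, d] :=
    ⟨S 0 0, S 0 1, S 1 1, by ext i j; fin_cases i <;> fin_cases j <;> simp [h10]⟩
  by_cases hq0 : q = 0
  · refine ⟨1, by simp, by simp, ?_⟩
    rw [one_mul, Matrix.transpose_one, mul_one, hSe]
    simp [hq0]
  · set Δ := Real.sqrt ((p - r) ^ 2 + 4 * q ^ 2) with hD
    have hD2 : Δ ^ 2 = (p - r) ^ 2 + 4 * q ^ 2 := Real.sq_sqrt (by positivity)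
    set l := (p + r + Δ) / 2 with hl
    have hchar : l ^ 2 - (p + r) * l + (p * r - q ^ 2) = 0 := by
      rw [hl]
      field_simp
      linarith [hD2]
    have hm0 : 0 < q ^ 2 + (l - p) ^ 2 := by positivity
    set m := Real.sqrt (q ^ 2 + (l - p) ^ 2) with hm_def
    have hm : 0 < m := Real.sqrt_pos.mpr hm0
    have hm2 : m ^ 2 = q ^ 2 + (l - p) ^ 2 := Real.sq_sqrt hm0.le
    have hm2' : m ^ 2 * 4 = q ^ 2 * 4 + (r - p) ^ 2 + 2 * ((r - p) * Δ) + Δ ^ 2 := by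
      rw [hm2, hl]; ring
    refine ⟨!![q / m, (l - p) / m; -((l - p) / m), q / m], ?_, ?_, ?_⟩
    · rw [t2', Matrix.mul_fin_two, one_fin_two]
      ext i j
      fin_cases i <;> fin_cases j <;> simp <;> (field_simp; linarith [hm2', hD2])
    · rw [det_fin_two_of]
      field_simp
      linarith [hm2', hD2]
    · rw [hSe, t2', Matrix.mul_fin_two, Matrix.mul_fin_two]
      simp only [Matrix.cons_val', Matrix.cons_val_zero, Matrix.cons_val_one,
        Matrix.head_cons, Matrix.head_fin_const, Matrix.empty_val', Matrix.cons_val_fin_one,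
        Matrix.of_apply]
      field_simp
      linear_combination q * hchar - q / 2 * hD2

lemma svd_two (C : Matrix (Fin 2) (Fin 2) ℝ) :
    ∃ (R₁ R₂ : Matrix (Fin 2) (Fin 2) ℝ) (c d : ℝ),
      R₁ * R₁ᵀ = 1 ∧ R₂ * R₂ᵀ = 1 ∧ R₁.det = 1 ∧ R₂.det = 1 ∧
      R₁ * C * R₂ᵀ = !![c, 0; 0, d] := by
  obtain ⟨R, hRo, hRd, hRs⟩ := polar_step C
  obtain ⟨G, hGo, hGd, hG01⟩ := diag_step (R * C) hRs
  set W := G * (R * C) * Gᵀ with hW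
  have hWs : Wᵀ = W := by
    rw [hW, Matrix.transpose_mul, Matrix.transpose_mul, Matrix.transpose_transpose, hRs]
    noncomm_ring
  have hW10 : W 1 0 = 0 := by
    have : Wᵀ 0 1 = W 0 1 := by rw [hWs]
    rw [Matrix.transpose_apply] at this
    rw [this]
    exact hG01
  refine ⟨G * R, G, W 0 0, W 1 1, ?_, hGo, by rw [Matrix.det_mul, hGd, hRd, one_mul], hGd, ?_⟩
  · rw [Matrix.transpose_mul, Matrix.mul_assoc, ← Matrix.mul_assoc R, hRo, one_mul, hGo]
  · have : G * R * C * Gᵀ = W := by rw [hW, Matrix.mul_assoc G R C]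
    rw [this]
    ext i j
    fin_cases i <;> fin_cases j <;> simp [hG01, hW10]

lemma reduction (A B C : Matrix (Fin 2) (Fin 2) ℝ) (hA : Aᵀ = A) (hB : Bᵀ = B)
    (hpA : A.PosDef) (hpB : B.PosDef) :
    ∃ (S₁ S₂ : Matrix (Fin 2) (Fin 2) ℝ) (a b c d : ℝ),
      0 < a ∧ 0 < b ∧ a ^ 2 = A.det ∧ b ^ 2 = B.det ∧ S₁.det = 1 ∧ S₂.det = 1 ∧
      S₁ * A * S₁ᵀ = a • (1 : Matrix (Fin 2) (Fin 2) ℝ) ∧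
      S₂ * B * S₂ᵀ = b • (1 : Matrix (Fin 2) (Fin 2) ℝ) ∧
      S₁ * C * S₂ᵀ = !![c, 0; 0, d] := by
  obtain ⟨T₁, a, ha, ha2, hT₁d, hT₁⟩ := normalize_posdef A hA hpA
  obtain ⟨T₂, b, hb, hb2, hT₂d, hT₂⟩ := normalize_posdef B hB hpB
  obtain ⟨R₁, R₂, c, d, hR₁o, hR₂o, hR₁d, hR₂d, hsvd⟩ := svd_two (T₁ * C * T₂ᵀ)
  refine ⟨R₁ * T₁, R₂ * T₂, a, b, c, d, ha, hb, ha2, hb2,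
    by rw [Matrix.det_mul, hR₁d, hT₁d, one_mul],
    by rw [Matrix.det_mul, hR₂d, hT₂d, one_mul], ?_, ?_, ?_⟩
  · rw [Matrix.transpose_mul]
    calc R₁ * T₁ * A * (T₁ᵀ * R₁ᵀ) = R₁ * (T₁ * A * T₁ᵀ) * R₁ᵀ := by noncomm_ring
      _ = a • (R₁ * R₁ᵀ) := by rw [hT₁, Matrix.mul_smul, Matrix.smul_mul, mul_one]
      _ = a • 1 := by rw [hR₁o]
  · rw [Matrix.transpose_mul]
    calc R₂ * T₂ * B * (T₂ᵀ * R₂ᵀ) = R₂ * (T₂ * B * T₂ᵀ) * R₂ᵀ := by noncomm_ring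
      _ = b • (R₂ * R₂ᵀ) := by rw [hT₂, Matrix.mul_smul, Matrix.smul_mul, mul_one]
      _ = b • 1 := by rw [hR₂o]
  · rw [Matrix.transpose_mul]
    calc R₁ * T₁ * C * (T₂ᵀ * R₂ᵀ) = R₁ * (T₁ * C * T₂ᵀ) * R₂ᵀ := by noncomm_ring
      _ = !![c, 0; 0, d] := hsvd

lemma cplx_mul {ι : Type*} [Fintype ι] (M N : Matrix ι ι ℝ) :
    cplx (M * N) = cplx M * cplx N := by
  ext i j
  simp only [cplx, Matrix.map_apply, Matrix.mul_apply]
  push_cast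
  rfl

lemma cplx_conjTranspose {ι : Type*} (M : Matrix ι ι ℝ) : (cplx M)ᴴ = cplx Mᵀ := by
  ext i j
  simp [cplx, conjTranspose_apply, Complex.conj_ofReal]

lemma blocks_eq (S₁ S₂ A B C : Matrix (Fin 2) (Fin 2) ℝ) :
    fromBlocks S₁ 0 0 S₂ * fromBlocks A C Cᵀ B * (fromBlocks S₁ 0 0 S₂)ᵀ =
      fromBlocks (S₁ * A * S₁ᵀ) (S₁ * C * S₂ᵀ) (S₂ * Cᵀ * S₁ᵀ) (S₂ * B * S₂ᵀ) := by
  rw [Matrix.fromBlocks_transpose, Matrix.fromBlocks_multiply, Matrix.fromBlocks_multiply]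
  simp [Matrix.mul_assoc]

lemma omega_conj (S₁ S₂ : Matrix (Fin 2) (Fin 2) ℝ) (h1 : S₁.det = 1) (h2 : S₂.det = 1) :
    fromBlocks S₁ 0 0 S₂ * Omega2mode * (fromBlocks S₁ 0 0 S₂)ᵀ = Omega2mode := by
  rw [Omega2mode, Matrix.fromBlocks_transpose, Matrix.fromBlocks_multiply,
    Matrix.fromBlocks_multiply]
  have e1 : S₁ * omega2 * S₁ᵀ = omega2 := by
    rw [mul_omega2_mul_transpose, h1, one_smul]
  have e2 : S₂ * omega2 * S₂ᵀ = omega2 := by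
    rw [mul_omega2_mul_transpose, h2, one_smul]
  simp [e1, e2]

lemma transform_iff (S₁ S₂ A B C : Matrix (Fin 2) (Fin 2) ℝ)
    (h1 : S₁.det = 1) (h2 : S₂.det = 1) :
    (cplx (fromBlocks (S₁ * A * S₁ᵀ) (S₁ * C * S₂ᵀ) (S₂ * Cᵀ * S₁ᵀ) (S₂ * B * S₂ᵀ))
        + Complex.I • cplx Omega2mode).PosSemidef
      ↔ (cplx (fromBlocks A C Cᵀ B) + Complex.I • cplx Omega2mode).PosSemidef := by
  set S : Matrix (Fin 2 ⊕ Fin 2) (Fin 2 ⊕ Fin 2) ℝ := fromBlocks S₁ 0 0 S₂ with hS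
  have hdetS : S.det = 1 := by
    rw [hS, Matrix.det_fromBlocks_zero₂₁, h1, h2, one_mul]
  have hdetcS : IsUnit (cplx S).det := by
    have : (cplx S).det = ((S.det : ℝ) : ℂ) := by
      have h := (RingHom.map_det Complex.ofRealHom S).symm
      simp only [RingHom.mapMatrix_apply, Complex.ofRealHom_eq_coe] at h
      exact h
    rw [this, hdetS]
    simp
  have key : cplx S * (cplx (fromBlocks A C Cᵀ B) + Complex.I • cplx Omega2mode) * (cplx S)ᴴ
      = cplx (fromBlocks (S₁ * A * S₁ᵀ) (S₁ * C * S₂ᵀ) (S₂ * Cᵀ * S₁ᵀ) (S₂ * B * S₂ᵀ))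
        + Complex.I • cplx Omega2mode := by
    rw [cplx_conjTranspose, Matrix.mul_add, Matrix.add_mul, Matrix.mul_smul, Matrix.smul_mul,
      ← cplx_mul, ← cplx_mul, ← cplx_mul, ← cplx_mul, blocks_eq, omega_conj S₁ S₂ h1 h2]
  rw [← key, conj_psd_iff _ _ hdetcS]

noncomputable def Mstd (a b c d : ℝ) : Matrix (Fin 4) (Fin 4) ℂ :=
  !![(a:ℂ), Complex.I, (c:ℂ), 0;
     -Complex.I, (a:ℂ), 0, (d:ℂ);
     (c:ℂ), 0, (b:ℂ), Complex.I;
     0, (d:ℂ), -Complex.I, (b:ℂ)]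

lemma det_resolvent (a b c d x : ℝ) :
    ((x : ℂ) • (1 : Matrix (Fin 4) (Fin 4) ℂ) - Mstd a b c d).det
      = ((x ^ 4 - (2*a + 2*b) * x ^ 3 + (a^2 + b^2 - 2 + 4*a*b - c^2 - d^2) * x ^ 2
          - ((a + b) * (2*a*b - 2 - c^2 - d^2)) * x
          + ((a*b - c^2) * (a*b - d^2) + 1 - a^2 - b^2 - 2*c*d) : ℝ) : ℂ) := by
  have h : ((x : ℂ) • (1 : Matrix (Fin 4) (Fin 4) ℂ) - Mstd a b c d)
      = !![(x:ℂ) - a, -Complex.I, -(c:ℂ), 0;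
           Complex.I, (x:ℂ) - a, 0, -(d:ℂ);
           -(c:ℂ), 0, (x:ℂ) - b, -Complex.I;
           0, -(d:ℂ), Complex.I, (x:ℂ) - b] := by
    ext i j
    fin_cases i <;> fin_cases j <;>
      simp [Mstd, Matrix.smul_apply, Matrix.one_apply, Matrix.sub_apply]
  rw [h]
  simp [Matrix.det_succ_row_zero, Fin.sum_univ_succ, Fin.succAbove]
  push_cast
  ring_nf
  simp [Complex.I_sq]
  ring

lemma herm_Mstd (a b c d : ℝ) : (Mstd a b c d).IsHermitian := by
  rw [Matrix.IsHermitian]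
  ext i j
  fin_cases i <;> fin_cases j <;>
    simp [Mstd, conjTranspose_apply, Complex.conj_ofReal]

lemma std_psd_iff (a b c d : ℝ) (ha : 0 < a) (hb : 0 < b) :
    (Mstd a b c d).PosSemidef ↔
      (c^2 + d^2 ≤ 2*a*b - 2 ∧ a^2 + b^2 + 2*c*d ≤ 1 + (a*b - c^2)*(a*b - d^2)) := by
  have hherm := herm_Mstd a b c d
  set l : Fin 4 → ℝ := hherm.eigenvalues with hl
  have hfac : ∀ x : ℝ, (x - l 0) * (x - l 1) * (x - l 2) * (x - l 3)
      = x ^ 4 - (2*a + 2*b) * x ^ 3 + (a^2 + b^2 - 2 + 4*a*b - c^2 - d^2) * x ^ 2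
          - ((a + b) * (2*a*b - 2 - c^2 - d^2)) * x
          + ((a*b - c^2) * (a*b - d^2) + 1 - a^2 - b^2 - 2*c*d) := by
    intro x
    have h1 := charpoly_factor hherm x
    rw [det_resolvent] at h1
    rw [Fin.prod_univ_four] at h1
    push_cast at h1
    apply Complex.ofReal_injective
    push_cast
    exact h1.symm
  constructor
  · intro hp
    have hlnn : ∀ i, 0 ≤ l i := fun i => hp.eigenvalues_nonneg i
    have hE3 : (a + b) * (2*a*b - 2 - c^2 - d^2)
        = l 0 * l 1 * l 2 + l 0 * l 1 * l 3 + l 0 * l 2 * l 3 + l 1 * l 2 * l 3 := by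
      linear_combination (2/3) * (hfac 1) - (2/3) * (hfac (-1)) - (1/12) * (hfac 2)
        + (1/12) * (hfac (-2))
    have hE4 : (a*b - c^2) * (a*b - d^2) + 1 - a^2 - b^2 - 2*c*d
        = l 0 * l 1 * l 2 * l 3 := by
      linear_combination -(hfac 0)
    have h3nn : 0 ≤ (a + b) * (2*a*b - 2 - c^2 - d^2) := by
      rw [hE3]
      have := hlnn 0; have := hlnn 1; have := hlnn 2; have := hlnn 3
      positivity
    have h4nn : 0 ≤ (a*b - c^2) * (a*b - d^2) + 1 - a^2 - b^2 - 2*c*d := by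
      rw [hE4]
      have := hlnn 0; have := hlnn 1; have := hlnn 2; have := hlnn 3
      positivity
    constructor
    · have hab : 0 < a + b := by linarith
      have := (mul_nonneg_iff_of_pos_left hab).mp h3nn
      linarith
    · linarith
  · rintro ⟨h1, h2⟩
    have hE1 : (0:ℝ) ≤ 2*a + 2*b := by linarith
    have hE2 : (0:ℝ) ≤ a^2 + b^2 - 2 + 4*a*b - c^2 - d^2 := by nlinarith [sq_nonneg (a + b)]
    have hE3 : (0:ℝ) ≤ (a + b) * (2*a*b - 2 - c^2 - d^2) := by
      apply mul_nonneg (by linarith)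
      linarith
    have hE4 : (0:ℝ) ≤ (a*b - c^2) * (a*b - d^2) + 1 - a^2 - b^2 - 2*c*d := by linarith
    have hlnn : ∀ i, 0 ≤ l i := by
      intro i
      by_contra hneg
      push_neg at hneg
      have hzero : (l i - l 0) * (l i - l 1) * (l i - l 2) * (l i - l 3) = 0 := by
        fin_cases i <;> simp
      have hQ := hfac (l i)
      rw [hzero] at hQ
      have n1 : 0 < -(l i) := by linarith
      nlinarith [pow_pos n1 4, mul_nonneg hE1 (pow_pos n1 3).le,
        mul_nonneg hE2 (sq_nonneg (l i)), mul_nonneg hE3 n1.le, hE4]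
    exact hherm.posSemidef_iff_eigenvalues_nonneg.mpr hlnn

def sumEquiv : Fin 4 ≃ Fin 2 ⊕ Fin 2 where
  toFun := ![Sum.inl 0, Sum.inl 1, Sum.inr 0, Sum.inr 1]
  invFun := Sum.elim ![0, 1] ![2, 3]
  left_inv := by decide
  right_inv := by decide

lemma submatrix_std (a b c d : ℝ) :
    (cplx (fromBlocks (a • (1 : Matrix (Fin 2) (Fin 2) ℝ)) !![c, 0; 0, d]
        (!![c, 0; 0, d])ᵀ (b • 1)) + Complex.I • cplx Omega2mode).submatrix sumEquiv sumEquiv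
      = Mstd a b c d := by
  rw [t2']
  ext i j
  fin_cases i <;> fin_cases j <;>
    simp [Mstd, cplx, Omega2mode, omega2, sumEquiv, fromBlocks, Matrix.smul_apply,
      Matrix.one_apply]

lemma std_block_psd_iff (a b c d : ℝ) (ha : 0 < a) (hb : 0 < b) :
    (cplx (fromBlocks (a • (1 : Matrix (Fin 2) (Fin 2) ℝ)) !![c, 0; 0, d]
        (!![c, 0; 0, d])ᵀ (b • 1)) + Complex.I • cplx Omega2mode).PosSemidef ↔
      (c^2 + d^2 ≤ 2*a*b - 2 ∧ a^2 + b^2 + 2*c*d ≤ 1 + (a*b - c^2)*(a*b - d^2)) := by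
  rw [← std_psd_iff a b c d ha hb]
  constructor
  · intro hp
    rw [← submatrix_std a b c d]
    exact hp.submatrix _
  · intro hp
    have h2 := hp.submatrix ⇑sumEquiv.symm
    rwa [← submatrix_std a b c d, Matrix.submatrix_submatrix,
      Equiv.self_comp_symm, Matrix.submatrix_id_id] at h2

lemma det_std_real (a b c d : ℝ) :
    (fromBlocks (a • (1 : Matrix (Fin 2) (Fin 2) ℝ)) !![c, 0; 0, d]
        (!![c, 0; 0, d])ᵀ (b • 1)).det = (a*b - c^2) * (a*b - d^2) := by
  rw [← Matrix.det_submatrix_equiv_self sumEquiv]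
  have e : (fromBlocks (a • (1 : Matrix (Fin 2) (Fin 2) ℝ)) !![c, 0; 0, d]
        (!![c, 0; 0, d])ᵀ (b • 1)).submatrix sumEquiv sumEquiv
      = !![a, 0, c, 0; 0, a, 0, d; c, 0, b, 0; 0, d, 0, b] := by
    rw [t2']
    ext i j
    fin_cases i <;> fin_cases j <;>
      simp [sumEquiv, fromBlocks, Matrix.smul_apply, Matrix.one_apply]
  rw [e]
  simp [Matrix.det_succ_row_zero, Fin.sum_univ_succ, Fin.succAbove]
  ring

lemma corner_posdef (X : Matrix (Fin 2) (Fin 2) ℝ) (hX : Xᵀ = X)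
    (h : (X.map Complex.ofReal + Complex.I • omega2.map Complex.ofReal).PosSemidef) :
    X.PosDef := by
  have h10 : X 1 0 = X 0 1 := by
    conv_lhs => rw [← hX]
    rfl
  set N := X.map Complex.ofReal + Complex.I • omega2.map Complex.ofReal with hN
  have hdetN : N.det = ((X.det - 1 : ℝ) : ℂ) := by
    rw [hN, det_fin_two]
    simp [Matrix.add_apply, Matrix.smul_apply, Matrix.map_apply, omega2, h10, det_fin_two]
    ring_nf
    simp [Complex.I_sq]
    ring
  have hd0 : 0 ≤ X.det - 1 := by
    have hprod := h.isHermitian.det_eq_prod_eigenvalues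
    have he0 := h.eigenvalues_nonneg 0
    have he1 := h.eigenvalues_nonneg 1
    rw [Fin.prod_univ_two] at hprod
    rw [hdetN] at hprod
    have : (X.det - 1 : ℝ) = h.1.eigenvalues 0 * h.1.eigenvalues 1 := by
      have h2 : ((X.det - 1 : ℝ) : ℂ) = ((h.1.eigenvalues 0 * h.1.eigenvalues 1 : ℝ) : ℂ) := by
        push_cast
        push_cast at hprod
        exact hprod
      exact Complex.ofReal_inj.mp h2
    rw [this]
    exact mul_nonneg he0 he1
  have h00 : 0 ≤ X 0 0 := by
    have := h.dotProduct_mulVec_nonneg (Pi.single 0 1)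
    have e : dotProduct (star (Pi.single 0 1 : Fin 2 → ℂ)) (N *ᵥ Pi.single 0 1)
        = ((X 0 0 : ℝ) : ℂ) := by
      simp [dotProduct, mulVec, Fin.sum_univ_two, Pi.single_apply, hN, Matrix.add_apply,
        Matrix.smul_apply, Matrix.map_apply, omega2]
    rw [e] at this
    exact_mod_cast Complex.zero_le_real.mp this
  have hdetpos : 0 < X.det := by linarith
  have h00pos : 0 < X 0 0 := by
    rcases lt_or_eq_of_le h00 with h' | h'
    · exact h'
    · exfalso
      have := X.det_fin_two
      rw [h10, ← h'] at this
      nlinarith [sq_nonneg (X 0 1)]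
  exact posDef_two_iff X hX h00pos hdetpos

end Aux

/-- Local-invariant genuineness criterion: V = [[A,C],[Cᵀ,B]] satisfies V + iΩ ≥ 0 iff
A > 0, B > 0, Δ(V) ≤ 1 + det V, and 2√(det A det B) + (det C)² ≤ det V + det A det B. -/
theorem genuineness_local_invariants (A B C : Matrix (Fin 2) (Fin 2) ℝ)
    (hA : Aᵀ = A) (hB : Bᵀ = B) :
    (cplx (Matrix.fromBlocks A C Cᵀ B) + Complex.I • cplx Omega2mode).PosSemidef
      ↔ (A.PosDef ∧ B.PosDef ∧
         A.det + B.det + 2 * C.det ≤ 1 + (Matrix.fromBlocks A C Cᵀ B).det ∧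
         2 * Real.sqrt (A.det * B.det) + C.det ^ 2
           ≤ (Matrix.fromBlocks A C Cᵀ B).det + A.det * B.det) := by
  have cornerA : (cplx (Matrix.fromBlocks A C Cᵀ B)
      + Complex.I • cplx Omega2mode).PosSemidef → A.PosDef := by
    intro h
    apply corner_posdef A hA
    have hsub := h.submatrix (Sum.inl : Fin 2 → Fin 2 ⊕ Fin 2)
    have e : (cplx (Matrix.fromBlocks A C Cᵀ B)
          + Complex.I • cplx Omega2mode).submatrix Sum.inl Sum.inl
        = A.map Complex.ofReal + Complex.I • omega2.map Complex.ofReal := by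
      ext i j
      simp [cplx, Omega2mode, Matrix.submatrix_apply, Matrix.add_apply, Matrix.smul_apply,
        Matrix.fromBlocks, Matrix.map_apply]
    rwa [e] at hsub
  have cornerB : (cplx (Matrix.fromBlocks A C Cᵀ B)
      + Complex.I • cplx Omega2mode).PosSemidef → B.PosDef := by
    intro h
    apply corner_posdef B hB
    have hsub := h.submatrix (Sum.inr : Fin 2 → Fin 2 ⊕ Fin 2)
    have e : (cplx (Matrix.fromBlocks A C Cᵀ B)
          + Complex.I • cplx Omega2mode).submatrix Sum.inr Sum.inr
        = B.map Complex.ofReal + Complex.I • omega2.map Complex.ofReal := by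
      ext i j
      simp [cplx, Omega2mode, Matrix.submatrix_apply, Matrix.add_apply, Matrix.smul_apply,
        Matrix.fromBlocks, Matrix.map_apply]
    rwa [e] at hsub
  constructor
  · intro h
    have hApd := cornerA h
    have hBpd := cornerB h
    obtain ⟨S₁, S₂, a, b, c, d, ha, hb, ha2, hb2, h1d, h2d, hSA, hSB, hSC⟩ :=
      reduction A B C hA hB hApd hBpd
    have hSCT : S₂ * Cᵀ * S₁ᵀ = (!![c, 0; 0, d])ᵀ := by
      rw [← hSC, Matrix.transpose_mul, Matrix.transpose_mul, Matrix.transpose_transpose,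
        Matrix.mul_assoc]
    have htr := (transform_iff S₁ S₂ A B C h1d h2d).mpr h
    rw [hSA, hSB, hSC, hSCT] at htr
    obtain ⟨hin1, hin2⟩ := (std_block_psd_iff a b c d ha hb).mp htr
    have hdetA : A.det = a ^ 2 := ha2.symm
    have hdetB : B.det = b ^ 2 := hb2.symm
    have hdetC : C.det = c * d := by
      have hh := congrArg Matrix.det hSC
      rw [Matrix.det_mul, Matrix.det_mul, h1d, Matrix.det_transpose, h2d, one_mul, mul_one,
        det_fin_two_of] at hh
      simpa using hh
    have hdetV : (Matrix.fromBlocks A C Cᵀ B).det = (a*b - c^2) * (a*b - d^2) := by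
      have hbl := congrArg Matrix.det (blocks_eq S₁ S₂ A B C)
      rw [Matrix.det_mul, Matrix.det_mul, Matrix.det_transpose] at hbl
      have hdS : (fromBlocks S₁ 0 0 S₂).det = 1 := by
        rw [Matrix.det_fromBlocks_zero₂₁, h1d, h2d, one_mul]
      rw [hdS, one_mul, mul_one] at hbl
      rw [hbl, hSA, hSB, hSC, hSCT, det_std_real]
    have hsqrt : Real.sqrt (A.det * B.det) = a * b := by
      rw [hdetA, hdetB, show a^2 * b^2 = (a*b)^2 by ring]
      exact Real.sqrt_sq (by positivity)
    refine ⟨hApd, hBpd, ?_, ?_⟩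
    · rw [hdetA, hdetB, hdetC, hdetV]
      nlinarith
    · rw [hsqrt, hdetC, hdetV, hdetA, hdetB]
      nlinarith [mul_nonneg (mul_pos ha hb).le
        (by linarith : (0:ℝ) ≤ 2*a*b - 2 - c^2 - d^2)]
  · rintro ⟨hApd, hBpd, hi1, hi2⟩
    obtain ⟨S₁, S₂, a, b, c, d, ha, hb, ha2, hb2, h1d, h2d, hSA, hSB, hSC⟩ :=
      reduction A B C hA hB hApd hBpd
    have hSCT : S₂ * Cᵀ * S₁ᵀ = (!![c, 0; 0, d])ᵀ := by
      rw [← hSC, Matrix.transpose_mul, Matrix.transpose_mul, Matrix.transpose_transpose,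
        Matrix.mul_assoc]
    have hdetA : A.det = a ^ 2 := ha2.symm
    have hdetB : B.det = b ^ 2 := hb2.symm
    have hdetC : C.det = c * d := by
      have hh := congrArg Matrix.det hSC
      rw [Matrix.det_mul, Matrix.det_mul, h1d, Matrix.det_transpose, h2d, one_mul, mul_one,
        det_fin_two_of] at hh
      simpa using hh
    have hdetV : (Matrix.fromBlocks A C Cᵀ B).det = (a*b - c^2) * (a*b - d^2) := by
      have hbl := congrArg Matrix.det (blocks_eq S₁ S₂ A B C)
      rw [Matrix.det_mul, Matrix.det_mul, Matrix.det_transpose] at hbl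
      have hdS : (fromBlocks S₁ 0 0 S₂).det = 1 := by
        rw [Matrix.det_fromBlocks_zero₂₁, h1d, h2d, one_mul]
      rw [hdS, one_mul, mul_one] at hbl
      rw [hbl, hSA, hSB, hSC, hSCT, det_std_real]
    have hsqrt : Real.sqrt (A.det * B.det) = a * b := by
      rw [hdetA, hdetB, show a^2 * b^2 = (a*b)^2 by ring]
      exact Real.sqrt_sq (by positivity)
    rw [hdetA, hdetB, hdetC, hdetV] at hi1
    rw [hsqrt, hdetC, hdetV, hdetA, hdetB] at hi2
    have hfirst : c^2 + d^2 ≤ 2*a*b - 2 := by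
      have hpos : (0:ℝ) < a * b := mul_pos ha hb
      have h0 : 0 ≤ (a * b) * (2*a*b - 2 - c^2 - d^2) := by nlinarith
      have := (mul_nonneg_iff_of_pos_left hpos).mp h0
      linarith
    have hsecond : a^2 + b^2 + 2*c*d ≤ 1 + (a*b - c^2)*(a*b - d^2) := by nlinarith
    have htr := (std_block_psd_iff a b c d ha hb).mpr ⟨hfirst, hsecond⟩
    rw [← hSCT, ← hSA, ← hSB, ← hSC] at htr
    exact (transform_iff S₁ S₂ A B C h1d h2d).mp htr
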